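/- Every integral lattice representing A₂ is isometric (in its rank-3 overlattice structure containing A₂ of codimension ≤ 1) to either A₂ ⊥ ⟨a⟩ or to the lattice with Gram matrix [[2,−1,0],[−1,2,−1],[0,−1,a]] (which equals (A₂ ⊥ ℤz) + ℤ([1] + z/3) with Q(z) = 9a−6) for a suitable positive integer a; moreover these lattices are mutually non-isometric, distinguished by discriminant (3a versus 3a−2 respectively). -/

import Mathlib

open Matrix

/-- Square integer matrices of size `n`, used as Gram matrices of lattices. -/
abbrev Mat (n : ℕ) := Matrix (Fin n) (Fin n) ℤ

/-- `G` is the Gram matrix of a positive definite integral lattice: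
it is symmetric and `vᵀ G v > 0` for every nonzero integer vector `v`. -/
def PosDefInt {n : ℕ} (G : Mat n) : Prop :=
  G.IsSymm ∧ ∀ v : Fin n → ℤ, v ≠ 0 → 0 < v ⬝ᵥ G.mulVec v

/-- The lattice with Gram matrix `L` represents the lattice with Gram matrix `N`:
there is an integral matrix `T` (whose rows are the coordinates of the images of
the basis vectors) with `T L Tᵀ = N`. -/
def Represents {m n : ℕ} (L : Mat m) (N : Mat n) : Prop :=
  ∃ T : Matrix (Fin n) (Fin m) ℤ, T * L * T.transpose = N

/-- Isometry of (positive definite) lattices, expressed as mutual representation. -/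
def Isom {m n : ℕ} (A : Mat m) (B : Mat n) : Prop :=
  Represents A B ∧ Represents B A

theorem Represents.rfl' {n : ℕ} (A : Mat n) : Represents A A :=
  ⟨1, by simp⟩

theorem Represents.trans' {a b c : ℕ} {A : Mat a} {B : Mat b} {C : Mat c}
    (h1 : Represents A B) (h2 : Represents B C) : Represents A C := by
  obtain ⟨T1, h1⟩ := h1
  obtain ⟨T2, h2⟩ := h2
  refine ⟨T2 * T1, ?_⟩
  rw [← h2, ← h1]
  simp [Matrix.mul_assoc, Matrix.transpose_mul]

/-- A positive definite integral lattice of rank `n`, given by a Gram matrix. -/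
def QLat (n : ℕ) := {G : Mat n // PosDefInt G}

instance latSetoid (n : ℕ) : Setoid (QLat n) where
  r A B := Isom A.1 B.1
  iseqv := ⟨fun A => ⟨Represents.rfl' _, Represents.rfl' _⟩,
    fun h => ⟨h.2, h.1⟩,
    fun h1 h2 => ⟨h1.1.trans' h2.1, h2.2.trans' h1.2⟩⟩

/-- Isometry classes of positive definite integral lattices of rank `n` (`Φ_n`). -/
def Cls (n : ℕ) := Quotient (latSetoid n)

/-- The isometry class of a lattice. -/
def cls {n : ℕ} (L : QLat n) : Cls n := Quotient.mk _ L

/-- A lattice represents an isometry class. -/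
def RepCls {m n : ℕ} (L : QLat m) (c : Cls n) : Prop :=
  ∃ N : QLat n, cls N = c ∧ Represents L.1 N.1

/-- The `n`-exceptional set of `L`: the classes of rank-`n` positive definite
integral lattices not represented by `L`. -/
def ExcSet (n : ℕ) {m : ℕ} (L : QLat m) : Set (Cls n) :=
  {c : Cls n | ¬ RepCls L c}
/-- Gram matrix of the orthogonal sum of two lattices. -/
def sumGram {a b : ℕ} (A : Mat a) (B : Mat b) : Mat (a + b) :=
  Matrix.reindex finSumFinEquiv finSumFinEquiv (Matrix.fromBlocks A 0 0 B)

/-- Gram matrix of the root lattice `A_n` with respect to the simple roots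
`α_j = e_{j-1} - e_j`. -/
def Agram (n : ℕ) : Mat n :=
  Matrix.of fun i j =>
    if i = j then 2
    else if (i : ℕ) + 1 = (j : ℕ) ∨ (j : ℕ) + 1 = (i : ℕ) then -1
    else 0

/-- Gram matrix of the lattice `(A_n ⊥ ℤz) + ℤ([i] + z/(n+1))`, where `Q(z) = k(n+1)`
and `q = (i(n+1-i) + k)/(n+1)` is the norm of the glued vector `[i] + z/(n+1)`:
the Cartan matrix of `A_n` bordered by the row/column `B(α_j, [i]) = δ_{j, n+1-i}`
with corner entry `q`. -/
def AGlue (n i : ℕ) (q : ℤ) : Mat (n + 1) :=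
  Matrix.of fun r c =>
    if hr : (r : ℕ) < n then
      if hc : (c : ℕ) < n then Agram n ⟨r, hr⟩ ⟨c, hc⟩
      else if (r : ℕ) = n - i then 1 else 0
    else
      if hc : (c : ℕ) < n then (if (c : ℕ) = n - i then 1 else 0)
      else q


lemma conj_apply {m : ℕ} (G : Mat 3) (S : Matrix (Fin m) (Fin 3) ℤ) (i j : Fin m) :
    (S * G * Sᵀ) i j = ∑ k, ∑ l, S i k * G k l * S j l := by
  simp only [Matrix.mul_apply, Matrix.transpose_apply, Finset.sum_mul]
  rw [Finset.sum_comm]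

lemma isom_of_unimodular {n : ℕ} (G N : Mat n) (E : Mat n)
    (hd : E.det = 1 ∨ E.det = -1) (h : E * G * Eᵀ = N) : Isom G N := by
  refine ⟨⟨E, h⟩, ⟨E.det • E.adjugate, ?_⟩⟩
  have hFE : (E.det • E.adjugate) * E = 1 := by
    rw [Matrix.smul_mul, Matrix.adjugate_mul, smul_smul]
    rcases hd with h1 | h1 <;> rw [h1] <;> norm_num
  have hEF : Eᵀ * (E.det • E.adjugate)ᵀ = 1 := by
    rw [← Matrix.transpose_mul, hFE, Matrix.transpose_one]
  calc (E.det • E.adjugate) * N * (E.det • E.adjugate)ᵀ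
      = ((E.det • E.adjugate) * E) * G * (Eᵀ * (E.det • E.adjugate)ᵀ) := by
        rw [← h]; noncomm_ring
    _ = G := by rw [hFE, hEF, Matrix.one_mul, Matrix.mul_one]

lemma det_eq_of_isom {n : ℕ} (A B : Mat n) (hA : 0 < A.det) (h : Isom A B) :
    A.det = B.det := by
  obtain ⟨⟨T, hT⟩, ⟨S, hS⟩⟩ := h
  have h1 : B.det = T.det ^ 2 * A.det := by
    rw [← hT]; simp [Matrix.det_mul, Matrix.det_transpose]; ring
  have h2 : A.det = S.det ^ 2 * B.det := by
    rw [← hS]; simp [Matrix.det_mul, Matrix.det_transpose]; ring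
  have h3 : (S.det ^ 2 * T.det ^ 2) * A.det = 1 * A.det := by
    rw [one_mul, mul_assoc, ← h1, ← h2]
  have h4 : T.det ^ 2 * S.det ^ 2 = 1 := by
    rw [mul_comm]; exact mul_right_cancel₀ (ne_of_gt hA) h3
  have h5 : T.det ^ 2 = 1 ∨ T.det ^ 2 = -1 :=
    Int.isUnit_iff.mp (IsUnit.of_mul_eq_one _ h4)
  rcases h5 with h5 | h5
  · rw [h1, h5, one_mul]
  · nlinarith [sq_nonneg T.det]

lemma diag_pos (G : Mat 3) (hpos : ∀ v : Fin 3 → ℤ, v ≠ 0 → 0 < v ⬝ᵥ G.mulVec v)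
    (E : Mat 3) (hdet : E.det ≠ 0) (i : Fin 3) : 0 < (E * G * Eᵀ) i i := by
  have hrow : E i ≠ 0 := by
    intro h0
    exact hdet (Matrix.det_eq_zero_of_row_eq_zero i (fun j => congrFun h0 j))
  have heq : (E * G * Eᵀ) i i = (E i) ⬝ᵥ G.mulVec (E i) := by
    simp only [Matrix.mul_apply, Matrix.transpose_apply, dotProduct, Matrix.mulVec,
      Finset.sum_mul, Finset.mul_sum]
    rw [Finset.sum_comm]
    apply Finset.sum_congr rfl; intro k _; apply Finset.sum_congr rfl; intro l _; ring
  rw [heq]; exact hpos _ hrow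

lemma sumGram_eq (a : ℤ) :
    sumGram (Agram 2) (Matrix.of fun _ _ : Fin 1 => a) = !![2,-1,0;-1,2,0;0,0,a] := by
  ext i j
  fin_cases i <;> fin_cases j <;>
    simp [sumGram, Agram, Matrix.reindex_apply, Matrix.submatrix_apply,
      Matrix.fromBlocks, finSumFinEquiv] <;> rfl

lemma det_sum (a : ℤ) : (!![2,-1,0;-1,2,0;0,0,a]).det = 3 * a := by
  rw [Matrix.det_fin_three]; simp; ring

lemma det_glue (a : ℤ) : (!![2,-1,0;-1,2,-1;0,-1,a]).det = 3 * a - 2 := by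
  rw [Matrix.det_fin_three]; simp; ring

lemma keyNT (p : ℕ) (hp : p.Prime) (α β : ℤ)
    (h1 : (p:ℤ) ∣ 2*α - β) (h2 : (p:ℤ) ∣ -α + 2*β)
    (h3 : (p:ℤ)*(p:ℤ) ∣ 2*α*α - 2*α*β + 2*β*β) : (p:ℤ) ∣ α ∧ (p:ℤ) ∣ β := by
  have hpZ : Prime (p:ℤ) := Nat.prime_iff_prime_int.mp hp
  obtain ⟨c, hc⟩ := h1
  obtain ⟨d, hd⟩ := h2
  have h3a : (p:ℤ) ∣ 3*α := ⟨2*c + d, by linarith⟩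
  have h3b : (p:ℤ) ∣ 3*β := ⟨c + 2*d, by linarith⟩
  by_cases hp3 : (p:ℤ) = 3
  · rw [hp3] at hc h3
    have hβ : β = 2*α - 3*c := by linarith
    subst hβ
    obtain ⟨e, he⟩ := h3
    have h9 : 6*α*α = 9*(e + 2*α*c - 2*c*c) := by linear_combination he
    have hdvd2 : (3:ℤ) ∣ 2*(α*α) := ⟨e + 2*α*c - 2*c*c, by linarith⟩
    have hα : (3:ℤ) ∣ α := by
      have := (Int.prime_three.dvd_mul.mp hdvd2).resolve_left (by norm_num)
      exact (Int.prime_three.dvd_mul.mp this).elim id id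
    obtain ⟨f, hf⟩ := hα
    rw [hp3]
    exact ⟨⟨f, hf⟩, ⟨2*f - c, by rw [hf]; ring⟩⟩
  · have hnd3 : ¬ (p:ℤ) ∣ 3 := by
      intro hdvd
      have hn : p ∣ 3 := by exact_mod_cast hdvd
      have := (Nat.prime_dvd_prime_iff_eq hp (by norm_num)).mp hn
      exact hp3 (by exact_mod_cast this)
    exact ⟨(hpZ.dvd_mul.mp h3a).resolve_left hnd3,
           (hpZ.dvd_mul.mp h3b).resolve_left hnd3⟩

lemma transpose3 (a b c d e f g h i : ℤ) :
    (!![a,b,c;d,e,f;g,h,i] : Mat 3)ᵀ = !![a,d,g;b,e,h;c,f,i] := by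
  ext x y; fin_cases x <;> fin_cases y <;> rfl

-- the three basis-change cases
lemma case_step (G : Mat 3) (hGpos : ∀ v : Fin 3 → ℤ, v ≠ 0 → 0 < v ⬝ᵥ G.mulVec v)
    (U : Mat 3) (hdetU : U.det = 1) (p q r : ℤ)
    (hUG : U * G * Uᵀ = !![2,-1,p;-1,2,q;p,q,r]) :
    ∃ a : ℤ, 0 < a ∧
      ((∃ E : Mat 3, (E.det = 1 ∨ E.det = -1) ∧ E * G * Eᵀ = !![2,-1,0;-1,2,0;0,0,a]) ∨
       (∃ E : Mat 3, (E.det = 1 ∨ E.det = -1) ∧ E * G * Eᵀ = !![2,-1,0;-1,2,-1;0,-1,a])) := by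
  have h3 : (p - q) % 3 = 0 ∨ (p - q) % 3 = 1 ∨ (p - q) % 3 = 2 := by omega
  have key : ∀ (V : Mat 3) (a : ℤ) (glue : Bool),
      V.det = 1 ∨ V.det = -1 →
      V * !![2,-1,p;-1,2,q;p,q,r] * Vᵀ =
        (if glue then !![2,-1,0;-1,2,-1;0,-1,a] else !![2,-1,0;-1,2,0;0,0,a]) →
      ∃ a : ℤ, 0 < a ∧
      ((∃ E : Mat 3, (E.det = 1 ∨ E.det = -1) ∧ E * G * Eᵀ = !![2,-1,0;-1,2,0;0,0,a]) ∨
       (∃ E : Mat 3, (E.det = 1 ∨ E.det = -1) ∧ E * G * Eᵀ = !![2,-1,0;-1,2,-1;0,-1,a])) := by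
    intro V a glue hdV hVN
    have hdE : (V * U).det = 1 ∨ (V * U).det = -1 := by
      rw [Matrix.det_mul, hdetU, mul_one]; exact hdV
    have hEG : (V * U) * G * (V * U)ᵀ = V * (U * G * Uᵀ) * Vᵀ := by
      simp only [Matrix.transpose_mul, Matrix.mul_assoc]
    rw [hUG, hVN] at hEG
    have hdne : (V * U).det ≠ 0 := by rcases hdE with h | h <;> rw [h] <;> norm_num
    have hapos : 0 < a := by
      have h22 := diag_pos G hGpos (V * U) hdne 2
      rw [hEG] at h22
      cases glue <;> simpa using h22
    cases glue
    · exact ⟨a, hapos, Or.inl ⟨V * U, hdE, by simpa using hEG⟩⟩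
    · exact ⟨a, hapos, Or.inr ⟨V * U, hdE, by simpa using hEG⟩⟩
  rcases h3 with h | h | h
  · obtain ⟨t, rfl⟩ : ∃ t, p = q + 3*t := ⟨(p-q)/3, by omega⟩
    refine key !![1,0,0;0,1,0; -(q+2*t), -(q+t), 1] (r - 2*q*q - 6*q*t - 6*t*t) false
      (Or.inl (by rw [Matrix.det_fin_three]; norm_num [Matrix.cons_val_two, Matrix.tail_cons])) ?_
    rw [transpose3, Matrix.mul_fin_three, Matrix.mul_fin_three]
    ext i j
    fin_cases i <;> fin_cases j <;>
      simp only [Matrix.cons_val', Matrix.cons_val_zero, Matrix.cons_val_one, Matrix.head_cons,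
        Matrix.empty_val', Matrix.cons_val_fin_one, Matrix.head_fin_const, Matrix.of_apply,
        Fin.isValue, Matrix.cons_val_two, Matrix.tail_cons, Bool.false_eq_true, if_true, if_false, reduceIte] <;> ring
  · obtain ⟨t, rfl⟩ : ∃ t, p = q + 3*t + 1 := ⟨(p-q-1)/3, by omega⟩
    refine key !![1,0,0;0,1,0; -(q+2*t+1), -(q+t+1), 1]
      (r - 2*q*q - 6*q*t - 6*t*t - 2*q - 4*t) true
      (Or.inl (by rw [Matrix.det_fin_three]; norm_num [Matrix.cons_val_two, Matrix.tail_cons])) ?_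
    rw [transpose3, Matrix.mul_fin_three, Matrix.mul_fin_three]
    ext i j
    fin_cases i <;> fin_cases j <;>
      simp only [Matrix.cons_val', Matrix.cons_val_zero, Matrix.cons_val_one, Matrix.head_cons,
        Matrix.empty_val', Matrix.cons_val_fin_one, Matrix.head_fin_const, Matrix.of_apply,
        Fin.isValue, Matrix.cons_val_two, Matrix.tail_cons, Bool.false_eq_true, if_true, if_false, reduceIte] <;> ring
  · obtain ⟨t, rfl⟩ : ∃ t, p = q + 3*t + 2 := ⟨(p-q-2)/3, by omega⟩
    refine key !![0,1,0;1,0,0; -(q+2*t+2), -(q+t+1), 1]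
      (r - 2*q*q - 6*q*t - 6*t*t - 4*q - 8*t - 2) true
      (Or.inr (by rw [Matrix.det_fin_three]; norm_num [Matrix.cons_val_two, Matrix.tail_cons])) ?_
    rw [transpose3, Matrix.mul_fin_three, Matrix.mul_fin_three]
    ext i j
    fin_cases i <;> fin_cases j <;>
      simp only [Matrix.cons_val', Matrix.cons_val_zero, Matrix.cons_val_one, Matrix.head_cons,
        Matrix.empty_val', Matrix.cons_val_fin_one, Matrix.head_fin_const, Matrix.of_apply,
        Fin.isValue, Matrix.cons_val_two, Matrix.tail_cons, Bool.false_eq_true, if_true, if_false, reduceIte] <;> ring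

lemma build_U (G : Mat 3) (hGsym : Gᵀ = G) (T : Matrix (Fin 2) (Fin 3) ℤ)
    (hT : T * G * Tᵀ = Agram 2) :
    ∃ (U : Mat 3) (p q r : ℤ), U.det = 1 ∧ U * G * Uᵀ = !![2,-1,p;-1,2,q;p,q,r] := by
  have hT' : T * G * Tᵀ = !![2,-1;-1,2] := by
    rw [hT]; decide
  have hBuu : (∑ k, ∑ l, T 0 k * G k l * T 0 l) = 2 := by rw [← conj_apply, hT']; rfl
  have hBuv : (∑ k, ∑ l, T 0 k * G k l * T 1 l) = -1 := by rw [← conj_apply, hT']; rfl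
  have hBvu : (∑ k, ∑ l, T 1 k * G k l * T 0 l) = -1 := by rw [← conj_apply, hT']; rfl
  have hBvv : (∑ k, ∑ l, T 1 k * G k l * T 1 l) = 2 := by rw [← conj_apply, hT']; rfl
  simp only [Fin.sum_univ_three] at hBuu hBuv hBvu hBvv
  -- no prime divides all three 2x2 minors of T
  have hnop : ∀ p : ℕ, p.Prime →
      ¬ ((p:ℤ) ∣ T 0 1 * T 1 2 - T 0 2 * T 1 1 ∧
         (p:ℤ) ∣ T 0 2 * T 1 0 - T 0 0 * T 1 2 ∧
         (p:ℤ) ∣ T 0 0 * T 1 1 - T 0 1 * T 1 0) := by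
    rintro p hp ⟨d0, d1, d2⟩
    obtain ⟨α, β, hnb, hs⟩ :
        ∃ α β : ℤ, ¬((p:ℤ) ∣ α ∧ (p:ℤ) ∣ β) ∧
          ∀ j : Fin 3, (p:ℤ) ∣ α * T 0 j + β * T 1 j := by
      by_cases hu : ∀ j : Fin 3, (p:ℤ) ∣ T 0 j
      · refine ⟨1, 0, ?_, ?_⟩
        · rintro ⟨h1, -⟩
          have h2 := Int.le_of_dvd one_pos h1
          have h3 : (2:ℤ) ≤ (p:ℤ) := by exact_mod_cast hp.two_le
          omega
        · intro j
          obtain ⟨c, hc⟩ := hu j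
          exact ⟨c, by linear_combination hc⟩
      · push_neg at hu
        obtain ⟨k, hk⟩ := hu
        refine ⟨T 1 k, -(T 0 k), ?_, ?_⟩
        · rintro ⟨-, h2⟩; exact hk (dvd_neg.mp h2)
        · intro j
          fin_cases k <;> fin_cases j <;>
            simp only [Fin.zero_eta, Fin.mk_one, Fin.reduceFinMk] <;>
            first
              | (refine ⟨0, ?_⟩; ring1)
              | (obtain ⟨c, hc⟩ := d0; refine ⟨c, ?_⟩; linear_combination hc)
              | (obtain ⟨c, hc⟩ := d0; refine ⟨-c, ?_⟩; linear_combination -hc)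
              | (obtain ⟨c, hc⟩ := d1; refine ⟨c, ?_⟩; linear_combination hc)
              | (obtain ⟨c, hc⟩ := d1; refine ⟨-c, ?_⟩; linear_combination -hc)
              | (obtain ⟨c, hc⟩ := d2; refine ⟨c, ?_⟩; linear_combination hc)
              | (obtain ⟨c, hc⟩ := d2; refine ⟨-c, ?_⟩; linear_combination -hc)
    have hdvd1 : (p:ℤ) ∣ 2*α - β := by
      have heq : 2*α - β =
          (α*T 0 0 + β*T 1 0) * (G 0 0*T 0 0 + G 0 1*T 0 1 + G 0 2*T 0 2)
        + (α*T 0 1 + β*T 1 1) * (G 1 0*T 0 0 + G 1 1*T 0 1 + G 1 2*T 0 2)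
        + (α*T 0 2 + β*T 1 2) * (G 2 0*T 0 0 + G 2 1*T 0 1 + G 2 2*T 0 2) := by
        linear_combination (-α) * hBuu + (-β) * hBvu
      rw [heq]
      exact dvd_add (dvd_add ((hs 0).mul_right _) ((hs 1).mul_right _)) ((hs 2).mul_right _)
    have hdvd2 : (p:ℤ) ∣ -α + 2*β := by
      have heq : -α + 2*β =
          (α*T 0 0 + β*T 1 0) * (G 0 0*T 1 0 + G 0 1*T 1 1 + G 0 2*T 1 2)
        + (α*T 0 1 + β*T 1 1) * (G 1 0*T 1 0 + G 1 1*T 1 1 + G 1 2*T 1 2)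
        + (α*T 0 2 + β*T 1 2) * (G 2 0*T 1 0 + G 2 1*T 1 1 + G 2 2*T 1 2) := by
        linear_combination (-α) * hBuv + (-β) * hBvv
      rw [heq]
      exact dvd_add (dvd_add ((hs 0).mul_right _) ((hs 1).mul_right _)) ((hs 2).mul_right _)
    have hdvd3 : (p:ℤ)*(p:ℤ) ∣ 2*α*α - 2*α*β + 2*β*β := by
      have heq : 2*α*α - 2*α*β + 2*β*β =
          (α*T 0 0 + β*T 1 0) * (G 0 0*(α*T 0 0 + β*T 1 0) + G 0 1*(α*T 0 1 + β*T 1 1) + G 0 2*(α*T 0 2 + β*T 1 2))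
        + (α*T 0 1 + β*T 1 1) * (G 1 0*(α*T 0 0 + β*T 1 0) + G 1 1*(α*T 0 1 + β*T 1 1) + G 1 2*(α*T 0 2 + β*T 1 2))
        + (α*T 0 2 + β*T 1 2) * (G 2 0*(α*T 0 0 + β*T 1 0) + G 2 1*(α*T 0 1 + β*T 1 1) + G 2 2*(α*T 0 2 + β*T 1 2)) := by
        linear_combination (-(α*α)) * hBuu + (-(α*β)) * hBuv + (-(α*β)) * hBvu + (-(β*β)) * hBvv
      rw [heq]
      have inner : ∀ k : Fin 3, (p:ℤ) ∣
          G k 0*(α*T 0 0 + β*T 1 0) + G k 1*(α*T 0 1 + β*T 1 1) + G k 2*(α*T 0 2 + β*T 1 2) :=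
        fun k => dvd_add (dvd_add ((hs 0).mul_left _) ((hs 1).mul_left _)) ((hs 2).mul_left _)
      exact dvd_add (dvd_add (mul_dvd_mul (hs 0) (inner 0)) (mul_dvd_mul (hs 1) (inner 1)))
        (mul_dvd_mul (hs 2) (inner 2))
    exact hnb (keyNT p hp α β hdvd1 hdvd2 hdvd3)
  -- Bezout
  obtain ⟨x0, x1, x2, hbez⟩ : ∃ x0 x1 x2 : ℤ,
      (T 0 1 * T 1 2 - T 0 2 * T 1 1) * x0 + (T 0 2 * T 1 0 - T 0 0 * T 1 2) * x1 +
        (T 0 0 * T 1 1 - T 0 1 * T 1 0) * x2 = 1 := by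
    set M0 := T 0 1 * T 1 2 - T 0 2 * T 1 1 with hM0
    set M1 := T 0 2 * T 1 0 - T 0 0 * T 1 2 with hM1
    set M2 := T 0 0 * T 1 1 - T 0 1 * T 1 0 with hM2
    have hg : Int.gcd M0 (Int.gcd M1 M2 : ℤ) = 1 := by
      by_contra hne
      rcases Nat.eq_zero_or_pos (Int.gcd M0 (Int.gcd M1 M2 : ℤ)) with h0 | hposg
      · have h00 := Int.gcd_eq_zero_iff.mp h0
        have h11 := Int.gcd_eq_zero_iff.mp (by exact_mod_cast h00.2 : Int.gcd M1 M2 = 0)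
        exact hnop 2 Nat.prime_two
          ⟨by rw [h00.1]; exact dvd_zero _, by rw [h11.1]; exact dvd_zero _, by rw [h11.2]; exact dvd_zero _⟩
      · have hpp : (Int.gcd M0 (Int.gcd M1 M2 : ℤ)).minFac.Prime := Nat.minFac_prime hne
        have hd : ((Int.gcd M0 (Int.gcd M1 M2 : ℤ)).minFac : ℤ) ∣ (Int.gcd M0 (Int.gcd M1 M2 : ℤ) : ℤ) :=
          Int.natCast_dvd_natCast.mpr (Nat.minFac_dvd _)
        have hd1 : ((Int.gcd M0 (Int.gcd M1 M2 : ℤ)).minFac : ℤ) ∣ M0 := hd.trans (Int.gcd_dvd_left _ _)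
        have hd23 : ((Int.gcd M0 (Int.gcd M1 M2 : ℤ)).minFac : ℤ) ∣ (Int.gcd M1 M2 : ℤ) :=
          hd.trans (Int.gcd_dvd_right _ _)
        exact hnop _ hpp ⟨hd1, hd23.trans (Int.gcd_dvd_left _ _), hd23.trans (Int.gcd_dvd_right _ _)⟩
    have hb2 : (Int.gcd M1 M2 : ℤ) = M1 * Int.gcdA M1 M2 + M2 * Int.gcdB M1 M2 :=
      Int.gcd_eq_gcd_ab _ _
    have hb1 : (Int.gcd M0 (Int.gcd M1 M2 : ℤ) : ℤ) =
        M0 * Int.gcdA M0 (Int.gcd M1 M2 : ℤ) + (Int.gcd M1 M2 : ℤ) * Int.gcdB M0 (Int.gcd M1 M2 : ℤ) :=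
      Int.gcd_eq_gcd_ab _ _
    have hg' : (Int.gcd M0 (Int.gcd M1 M2 : ℤ) : ℤ) = 1 := by exact_mod_cast hg
    exact ⟨Int.gcdA M0 (Int.gcd M1 M2 : ℤ),
      Int.gcdA M1 M2 * Int.gcdB M0 (Int.gcd M1 M2 : ℤ),
      Int.gcdB M1 M2 * Int.gcdB M0 (Int.gcd M1 M2 : ℤ),
      by linear_combination -hb1 - Int.gcdB M0 (Int.gcd M1 M2 : ℤ) * hb2 + hg'⟩
  -- the unimodular extension
  set U : Mat 3 := !![T 0 0, T 0 1, T 0 2; T 1 0, T 1 1, T 1 2; x0, x1, x2] with hU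
  have hdetU : U.det = 1 := by
    rw [hU, Matrix.det_fin_three]
    simp only [Matrix.cons_val', Matrix.cons_val_zero, Matrix.cons_val_one, Matrix.head_cons,
      Matrix.empty_val', Matrix.cons_val_fin_one, Matrix.head_fin_const,
      Matrix.cons_val_two, Matrix.tail_cons, Matrix.of_apply, Fin.isValue]
    linear_combination hbez
  have hsymUG : (U * G * Uᵀ)ᵀ = U * G * Uᵀ := by
    rw [Matrix.transpose_mul, Matrix.transpose_mul, Matrix.transpose_transpose, hGsym,
      ← Matrix.mul_assoc]
  have e20 : (U * G * Uᵀ) 2 0 = (U * G * Uᵀ) 0 2 := congrFun (congrFun hsymUG 0) 2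
  have e21 : (U * G * Uᵀ) 2 1 = (U * G * Uᵀ) 1 2 := congrFun (congrFun hsymUG 1) 2
  have e00 : (U * G * Uᵀ) 0 0 = 2 := by
    rw [conj_apply]
    simp only [Fin.sum_univ_three, hU, Matrix.cons_val', Matrix.cons_val_zero,
      Matrix.cons_val_one, Matrix.head_cons, Matrix.empty_val', Matrix.cons_val_fin_one,
      Matrix.head_fin_const, Matrix.cons_val_two, Matrix.tail_cons, Matrix.of_apply, Fin.isValue]
    linear_combination hBuu
  have e01 : (U * G * Uᵀ) 0 1 = -1 := by
    rw [conj_apply]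
    simp only [Fin.sum_univ_three, hU, Matrix.cons_val', Matrix.cons_val_zero,
      Matrix.cons_val_one, Matrix.head_cons, Matrix.empty_val', Matrix.cons_val_fin_one,
      Matrix.head_fin_const, Matrix.cons_val_two, Matrix.tail_cons, Matrix.of_apply, Fin.isValue]
    linear_combination hBuv
  have e10 : (U * G * Uᵀ) 1 0 = -1 := by
    rw [conj_apply]
    simp only [Fin.sum_univ_three, hU, Matrix.cons_val', Matrix.cons_val_zero,
      Matrix.cons_val_one, Matrix.head_cons, Matrix.empty_val', Matrix.cons_val_fin_one,
      Matrix.head_fin_const, Matrix.cons_val_two, Matrix.tail_cons, Matrix.of_apply, Fin.isValue]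
    linear_combination hBvu
  have e11 : (U * G * Uᵀ) 1 1 = 2 := by
    rw [conj_apply]
    simp only [Fin.sum_univ_three, hU, Matrix.cons_val', Matrix.cons_val_zero,
      Matrix.cons_val_one, Matrix.head_cons, Matrix.empty_val', Matrix.cons_val_fin_one,
      Matrix.head_fin_const, Matrix.cons_val_two, Matrix.tail_cons, Matrix.of_apply, Fin.isValue]
    linear_combination hBvv
  refine ⟨U, (U * G * Uᵀ) 0 2, (U * G * Uᵀ) 1 2, (U * G * Uᵀ) 2 2, hdetU, ?_⟩
  rw [Matrix.eta_fin_three (U * G * Uᵀ), e00, e01, e10, e11, e20, e21]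
  simp

/-- Every rank-3 positive definite integral lattice representing
`A₂` is isometric to `A₂ ⊥ ⟨a⟩` or to the lattice with Gram matrix
`[[2,-1,0],[-1,2,-1],[0,-1,a]]` for a suitable positive integer `a`; moreover all
these lattices are mutually non-isometric. -/
theorem A2_rank3_classification (L : QLat 3) (h : Represents L.1 (Agram 2)) :
    (∃ a : ℤ, 0 < a ∧
      (Isom L.1 (sumGram (Agram 2) (Matrix.of fun _ _ : Fin 1 => a)) ∨
        Isom L.1 !![2, -1, 0; -1, 2, -1; 0, -1, a])) ∧
    (∀ a b : ℤ, 0 < a → 0 < b →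
      ¬ Isom (sumGram (Agram 2) (Matrix.of fun _ _ : Fin 1 => a))
        !![2, -1, 0; -1, 2, -1; 0, -1, b]) ∧
    (∀ a b : ℤ, 0 < a → 0 < b → a ≠ b →
      ¬ Isom (sumGram (Agram 2) (Matrix.of fun _ _ : Fin 1 => a))
          (sumGram (Agram 2) (Matrix.of fun _ _ : Fin 1 => b)) ∧
      ¬ Isom (!![2, -1, 0; -1, 2, -1; 0, -1, a] : Mat 3)
          !![2, -1, 0; -1, 2, -1; 0, -1, b]) := by
  refine ⟨?_, ?_, ?_⟩
  · obtain ⟨T, hT⟩ := h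
    obtain ⟨U, p, q, r, hdetU, hUG⟩ := build_U L.1 L.2.1 T hT
    obtain ⟨a, hapos, hcase⟩ := case_step L.1 L.2.2 U hdetU p q r hUG
    rcases hcase with ⟨E, hdE, hE⟩ | ⟨E, hdE, hE⟩
    · exact ⟨a, hapos, Or.inl (by
        rw [sumGram_eq]; exact isom_of_unimodular _ _ E hdE hE)⟩
    · exact ⟨a, hapos, Or.inr (isom_of_unimodular _ _ E hdE hE)⟩
  · intro a b ha hb hiso
    have h1 : (sumGram (Agram 2) (Matrix.of fun _ _ : Fin 1 => a)).det = 3 * a := by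
      rw [sumGram_eq]; exact det_sum a
    have hpos : 0 < (sumGram (Agram 2) (Matrix.of fun _ _ : Fin 1 => a)).det := by
      rw [h1]; linarith
    have hd := det_eq_of_isom _ _ hpos hiso
    rw [h1, det_glue] at hd
    omega
  · intro a b ha hb hab
    constructor
    · intro hiso
      have h1 : (sumGram (Agram 2) (Matrix.of fun _ _ : Fin 1 => a)).det = 3 * a := by
        rw [sumGram_eq]; exact det_sum a
      have hpos : 0 < (sumGram (Agram 2) (Matrix.of fun _ _ : Fin 1 => a)).det := by
        rw [h1]; linarith
      have hd := det_eq_of_isom _ _ hpos hiso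
      rw [h1] at hd
      rw [show (sumGram (Agram 2) (Matrix.of fun _ _ : Fin 1 => b)).det = 3 * b by
        rw [sumGram_eq]; exact det_sum b] at hd
      omega
    · intro hiso
      have hpos : 0 < (!![2, -1, 0; -1, 2, -1; 0, -1, a] : Mat 3).det := by
        rw [det_glue]; omega
      have hd := det_eq_of_isom _ _ hpos hiso
      rw [det_glue, det_glue] at hd
      omega
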